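/- arXiv:1903.11246 — 4 statements merged into one kernel-verified Lean document; each statement's English description precedes it below -/
import Mathlib

section
/- Let G be a graph whose state vertices form an undirected path v_1 — v_2 — ⋯ — v_n, with each state vertex having a self-loop, and with a single input vertex u attached by an edge to the terminal vertex v_n. Then G satisfies the dedicated-node condition: for every nonempty subset α of the state vertices with α ⊊ N(α), there exists a vertex j ∈ N(α)\α and exactly one vertex i ∈ α such that the edge (i,j) is present. -/
def nbhd {V : Type*} (Adj : V → V → Prop) (α : Set V) : Set V :=
  {j | ∃ i ∈ α, Adj i j}

/-- Adjacency of a path graph on state vertices `Fin n` (with self-loops and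
consecutive edges) together with one input vertex `Sum.inr ()` attached to the
terminal state vertex `v_n` (index `n-1`). -/
def pathAdj (n : ℕ) : (Fin n ⊕ Unit) → (Fin n ⊕ Unit) → Prop
  | .inl i, .inl j => i = j ∨ (i : ℕ) + 1 = (j : ℕ) ∨ (j : ℕ) + 1 = (i : ℕ)
  | .inl i, .inr _ => (i : ℕ) + 1 = n
  | .inr _, .inl j => (j : ℕ) + 1 = n
  | .inr _, .inr _ => False

theorem stmt_1 (n : ℕ) (hn : 0 < n) :
    ∀ α ⊆ {v : Fin n ⊕ Unit | ∃ i : Fin n, v = .inl i}, α.Nonempty →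
      α ⊂ nbhd (pathAdj n) α →
      ∃ j ∈ nbhd (pathAdj n) α \ α, ∃! i, i ∈ α ∧ pathAdj n i j := by
  classical
  intro α hsub hne _
  -- the set of state indices in α
  set S : Finset (Fin n) := Finset.univ.filter (fun k => Sum.inl k ∈ α) with hS
  have hSne : S.Nonempty := by
    obtain ⟨v, hv⟩ := hne
    obtain ⟨i, rfl⟩ := hsub hv
    exact ⟨i, by simp [hS, hv]⟩
  set M : Fin n := S.max' hSne with hM
  have hMα : Sum.inl M ∈ α := by
    have := S.max'_mem hSne
    simpa [hS] using this
  have hMmax : ∀ k : Fin n, Sum.inl k ∈ α → k ≤ M := by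
    intro k hk
    exact S.le_max' k (by simp [hS, hk])
  by_cases hlast : (M : ℕ) + 1 = n
  · -- use the input vertex
    refine ⟨Sum.inr (), ⟨⟨Sum.inl M, hMα, hlast⟩, ?_⟩, Sum.inl M, ⟨hMα, hlast⟩, ?_⟩
    · intro h
      obtain ⟨i, hi⟩ := hsub h
      exact nomatch hi
    · rintro (k | u) ⟨hk, hadj⟩
      · have hle := hMmax k hk
        have : (k : ℕ) = (M : ℕ) := by
          have : (k : ℕ) + 1 = n := hadj
          omega
        exact congrArg Sum.inl (Fin.ext this)
      · exact absurd hadj id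
  · -- use the state vertex M+1
    have hMlt : (M : ℕ) + 1 < n := by have := M.isLt; omega
    refine ⟨Sum.inl ⟨(M : ℕ) + 1, hMlt⟩,
      ⟨⟨Sum.inl M, hMα, Or.inr (Or.inl rfl)⟩, ?_⟩,
      Sum.inl M, ⟨hMα, Or.inr (Or.inl rfl)⟩, ?_⟩
    · intro h
      have := hMmax _ h
      simp [Fin.le_def] at this
    · rintro (k | u) ⟨hk, hadj⟩
      · have hle : (k : ℕ) ≤ (M : ℕ) := hMmax k hk
        rcases hadj with h1 | h2 | h3
        · have : (k : ℕ) = (M : ℕ) + 1 := by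
            simpa using congrArg Fin.val h1
          omega
        · have : (k : ℕ) = (M : ℕ) := by simpa using h2
          exact congrArg Sum.inl (Fin.ext this)
        · simp at h3; omega
      · obtain ⟨i, hi⟩ := hsub hk
        exact nomatch hi
end

section
/- Let L be the n×n tridiagonal matrix of the negative Laplacian of a path graph with all edge weights positive: L has off-diagonal entries L_{k,k+1} = L_{k+1,k} = a_k > 0 and diagonal entries making row sums zero (L_{11} = −a_1, L_{nn} = −a_{n−1}, L_{kk} = −a_{k−1} − a_k for 1 < k < n). Let b ∈ ℝ^n be the vector with b_n = c ≠ 0 and all other entries 0. Then the pair (L, b) is controllable, i.e., the Kalman controllability matrix [b, Lb, L²b, …, L^{n−1}b] has rank n. -/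
/-- Negative Laplacian of the undirected path on `n+1` vertices with edge
weights `a k` between vertices `k` and `k+1`; rows sum to zero. -/
def pathLap (n : ℕ) (a : Fin n → ℝ) : Matrix (Fin (n + 1)) (Fin (n + 1)) ℝ :=
  Matrix.of fun i j =>
    if h : (i : ℕ) + 1 = (j : ℕ) then a ⟨i, by have := j.isLt; omega⟩
    else if h' : (j : ℕ) + 1 = (i : ℕ) then a ⟨j, by have := i.isLt; omega⟩
    else if i = j then
      -((if hi : (i : ℕ) < n then a ⟨i, hi⟩ else 0) +
        (if hi : 0 < (i : ℕ) then a ⟨(i : ℕ) - 1, by have := i.isLt; omega⟩ else 0))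
    else 0

/-- Kalman controllability matrix `[b, Lb, L²b, …, Lⁿb]` for the pair `(L, b)`. -/
def kalman (n : ℕ) (L : Matrix (Fin (n + 1)) (Fin (n + 1)) ℝ)
    (b : Fin (n + 1) → ℝ) : Matrix (Fin (n + 1)) (Fin (n + 1)) ℝ :=
  Matrix.of fun i k => (L ^ (k : ℕ)).mulVec b i

lemma mulVec_apply' {m : Type*} [Fintype m] (M : Matrix m m ℝ) (v : m → ℝ) (i : m) :
    M.mulVec v i = ∑ j, M i j * v j := rfl

lemma pathLap_eq_zero (n : ℕ) (a : Fin n → ℝ) (i j : Fin (n + 1))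
    (h : (i : ℕ) + 1 < (j : ℕ) ∨ (j : ℕ) + 1 < (i : ℕ)) : pathLap n a i j = 0 := by
  unfold pathLap
  simp only [Matrix.of_apply]
  rw [dif_neg (by omega), dif_neg (by omega), if_neg (by intro hij; subst hij; omega)]

lemma pathLap_zero_vanish (n : ℕ) (a : Fin n → ℝ) (c : ℝ) :
    ∀ k : ℕ, ∀ i : Fin (n + 1), (i : ℕ) + k < n →
      ((pathLap n a) ^ k).mulVec (fun i => if (i : ℕ) = n then c else 0) i = 0 := by
  intro k
  induction k with
  | zero =>
    intro i hi
    simp only [pow_zero, Matrix.one_mulVec]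
    exact if_neg (by omega)
  | succ k ih =>
    intro i hi
    rw [pow_succ', ← Matrix.mulVec_mulVec, mulVec_apply']
    apply Finset.sum_eq_zero
    intro j _
    rcases le_or_gt (j : ℕ) ((i : ℕ) + 1) with hj | hj
    · rw [ih j (by omega), mul_zero]
    · rw [pathLap_eq_zero n a i j (Or.inl hj), zero_mul]

lemma pathLap_antidiag (n : ℕ) (a : Fin n → ℝ) (ha : ∀ k, 0 < a k) (c : ℝ) :
    ∀ k : ℕ, (hk : k ≤ n) → ∃ d : ℝ, 0 < d ∧
      ((pathLap n a) ^ k).mulVec (fun i => if (i : ℕ) = n then c else 0)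
        ⟨n - k, by omega⟩ = d * c := by
  intro k
  induction k with
  | zero =>
    intro _
    exact ⟨1, one_pos, by simp⟩
  | succ k ih =>
    intro hk
    obtain ⟨d, hd, hv⟩ := ih (by omega)
    refine ⟨a ⟨n - (k + 1), by omega⟩ * d, mul_pos (ha _) hd, ?_⟩
    rw [pow_succ', ← Matrix.mulVec_mulVec, mulVec_apply']
    rw [Finset.sum_eq_single (⟨n - k, by omega⟩ : Fin (n + 1))]
    · have h1 : pathLap n a ⟨n - (k+1), by omega⟩ ⟨n - k, by omega⟩
          = a ⟨n - (k + 1), by omega⟩ := by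
        unfold pathLap
        simp only [Matrix.of_apply]
        rw [dif_pos (by omega)]
      rw [h1, hv, mul_assoc]
    · intro j _ hj
      rcases le_or_gt (j : ℕ) (n - k - 1) with h | h
      · rw [pathLap_zero_vanish n a c k j (by omega), mul_zero]
      · have : (n - k : ℕ) < (j : ℕ) := by
          rcases Nat.lt_or_ge (j : ℕ) (n - k + 1) with h2 | h2
          · exfalso; apply hj; apply Fin.ext; simp; omega
          · omega
        rw [pathLap_eq_zero n a ⟨n - (k+1), by omega⟩ j (Or.inl (by simp; omega)), zero_mul]
    · intro h; exact absurd (Finset.mem_univ _) h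

theorem stmt_12 (n : ℕ) (a : Fin n → ℝ) (ha : ∀ k, 0 < a k) (c : ℝ) (hc : c ≠ 0) :
    (kalman n (pathLap n a) (fun i => if (i : ℕ) = n then c else 0)).rank = n + 1 := by
  set M := kalman n (pathLap n a) (fun i => if (i : ℕ) = n then c else 0) with hM
  set N := M.submatrix id Fin.rev with hN
  have hNrank : N.rank = M.rank := Matrix.rank_submatrix M (Equiv.refl _) Fin.revPerm
  have hdiag : ∀ i : Fin (n + 1), N i i ≠ 0 := by
    intro i
    have hrev : ((Fin.rev i : Fin (n+1)) : ℕ) = n - (i : ℕ) := by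
      rw [Fin.val_rev]; omega
    obtain ⟨d, hd, hv⟩ := pathLap_antidiag n a ha c (n - (i : ℕ)) (by omega)
    have : N i i = d * c := by
      rw [hN, Matrix.submatrix_apply, id, hM]
      show ((pathLap n a) ^ ((Fin.rev i : Fin (n+1)) : ℕ)).mulVec _ i = d * c
      rw [hrev]
      convert hv using 2
      apply Fin.ext
      simp
      omega
    rw [this]
    exact mul_ne_zero (ne_of_gt hd) hc
  have htri : N.BlockTriangular OrderDual.toDual := by
    intro i j hij
    have hij' : (i : ℕ) < (j : ℕ) := hij
    rw [hN, Matrix.submatrix_apply, id, hM]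
    show ((pathLap n a) ^ ((Fin.rev j : Fin (n+1)) : ℕ)).mulVec _ i = 0
    apply pathLap_zero_vanish
    rw [Fin.val_rev]
    have := i.isLt
    omega
  have hdet : N.det ≠ 0 := by
    rw [Matrix.det_of_lowerTriangular N htri]
    exact Finset.prod_ne_zero_iff.mpr fun i _ => hdiag i
  have hunit : IsUnit N := by
    rw [Matrix.isUnit_iff_isUnit_det]
    exact isUnit_iff_ne_zero.mpr hdet
  have := Matrix.rank_of_isUnit N hunit
  rw [← hNrank]
  simpa using this
end

section
/- Let L be the negative Laplacian of the undirected path on n vertices with arbitrary nonzero real edge weights a_1,…,a_{n−1} (L_{k,k+1} = L_{k+1,k} = a_k, diagonal entries chosen so that each row sums to zero), and let b = e_n (the n-th standard basis vector). Then the Kalman controllability matrix [b, Lb, …, L^{n−1}b] has rank n. -/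
lemma pathLap_far (n : ℕ) (a : Fin n → ℝ) {i j : Fin (n+1)}
    (h1 : (i:ℕ) + 1 ≠ j) (h2 : (j:ℕ) + 1 ≠ i) (h3 : i ≠ j) :
    pathLap n a i j = 0 := by
  simp [pathLap, h1, h2, h3]

lemma key (n : ℕ) (a : Fin n → ℝ) (ha : ∀ k, a k ≠ 0) (k : ℕ) (hk : k ≤ n) :
    (∀ i : Fin (n+1), (i:ℕ) + k < n →
      ((pathLap n a) ^ k).mulVec (Pi.single (Fin.last n) 1) i = 0) ∧
    (∀ i : Fin (n+1), (i:ℕ) + k = n →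
      ((pathLap n a) ^ k).mulVec (Pi.single (Fin.last n) 1) i ≠ 0) := by
  induction k with
  | zero =>
    constructor
    · intro i hi
      simp only [pow_zero, Matrix.one_mulVec]
      rw [Pi.single_apply, if_neg]
      intro h; subst h; simp [Fin.last] at hi
    · intro i hi
      have : i = Fin.last n := by ext; simpa [Fin.last] using hi
      subst this; simp
  | succ k ih =>
    have ih := ih (by omega)
    have hstep : ∀ i, ((pathLap n a) ^ (k+1)).mulVec (Pi.single (Fin.last n) 1) i
        = ∑ j, pathLap n a i j * ((pathLap n a) ^ k).mulVec (Pi.single (Fin.last n) 1) j := by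
      intro i
      rw [pow_succ', ← Matrix.mulVec_mulVec]
      rfl
    constructor
    · intro i hi
      rw [hstep]
      apply Finset.sum_eq_zero
      intro j _
      by_cases hj : (j:ℕ) + k < n
      · rw [ih.1 j hj, mul_zero]
      · rw [pathLap_far n a (by omega) (by omega) (by intro h; subst h; omega), zero_mul]
    · intro i hi
      rw [hstep]
      have hin : (i:ℕ) + 1 < n + 1 := by omega
      set j0 : Fin (n+1) := ⟨(i:ℕ)+1, hin⟩ with hj0
      rw [Finset.sum_eq_single j0]
      · apply mul_ne_zero
        · have : pathLap n a i j0 = a ⟨i, by omega⟩ := by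
            simp [pathLap, hj0]
          rw [this]; exact ha _
        · exact ih.2 j0 (by simp [hj0]; omega)
      · intro j _ hj
        by_cases hjk : (j:ℕ) + k < n
        · rw [ih.1 j hjk, mul_zero]
        · have hne : (j:ℕ) ≠ (i:ℕ) + 1 := fun h => hj (by ext; simp [hj0, h])
          rw [pathLap_far n a (by omega) (by omega) (by intro h; subst h; omega), zero_mul]
      · intro h; exact absurd (Finset.mem_univ j0) h

theorem stmt_13 (n : ℕ) (a : Fin n → ℝ) (ha : ∀ k, a k ≠ 0) :
    (kalman n (pathLap n a) (Pi.single (Fin.last n) 1)).rank = n + 1 := by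
  set K := kalman n (pathLap n a) (Pi.single (Fin.last n) 1) with hK
  have hdetN : (K.submatrix (Fin.revPerm : Equiv.Perm (Fin (n+1))) id).det ≠ 0 := by
    set N := K.submatrix (Fin.revPerm : Equiv.Perm (Fin (n+1))) id with hN
    have htri : N.BlockTriangular id := by
      intro i j hij
      have hij' : (j:ℕ) < (i:ℕ) := hij
      have : N i j = ((pathLap n a) ^ (j:ℕ)).mulVec (Pi.single (Fin.last n) 1) (Fin.rev i) := rfl
      rw [this]
      exact (key n a ha j (by omega)).1 _ (by rw [Fin.val_rev]; omega)
    rw [Matrix.det_of_upperTriangular htri]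
    apply Finset.prod_ne_zero_iff.mpr
    intro i _
    have : N i i = ((pathLap n a) ^ (i:ℕ)).mulVec (Pi.single (Fin.last n) 1) (Fin.rev i) := rfl
    rw [this]
    exact (key n a ha i (by omega)).2 _ (by rw [Fin.val_rev]; omega)
  rw [Matrix.det_permute] at hdetN
  have hdet : K.det ≠ 0 := fun h => hdetN (by rw [h, mul_zero])
  have : K.rank = Fintype.card (Fin (n+1)) :=
    Matrix.rank_of_isUnit K ((Matrix.isUnit_iff_isUnit_det K).mpr (isUnit_iff_ne_zero.mpr hdet))
  simpa using this
end

section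
/- Let G₁ and G₂ be two vertex-disjoint path graphs, each with state vertices having self-loops and having an input vertex attached to one terminal state vertex, and therefore each satisfying the dedicated-node condition. If G is formed from the disjoint union of G₁ and G₂ by adding one undirected edge between a state vertex of G₁ and a state vertex of G₂, then G satisfies the dedicated-node condition on the union of the state vertex sets. -/
def dedCond {V : Type*} (Adj : V → V → Prop) (S : Set V) : Prop :=
  ∀ α ⊆ S, α.Nonempty → α ⊂ nbhd Adj α →
    ∃ j ∈ nbhd Adj α \ α, ∃! i, i ∈ α ∧ Adj i j

/-- Two disjoint path graphs joined by one undirected edge between state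
vertex `i0` of the first and state vertex `j0` of the second. -/
def twoPathsAdj (n m : ℕ) (i0 : Fin n) (j0 : Fin m) :
    ((Fin n ⊕ Unit) ⊕ (Fin m ⊕ Unit)) → ((Fin n ⊕ Unit) ⊕ (Fin m ⊕ Unit)) → Prop
  | .inl a, .inl b => pathAdj n a b
  | .inr a, .inr b => pathAdj m a b
  | .inl a, .inr b => a = .inl i0 ∧ b = .inl j0
  | .inr a, .inl b => a = .inl j0 ∧ b = .inl i0

section Aux

variable {n m : ℕ} {i0 : Fin n} {j0 : Fin m}
  {α : Set ((Fin n ⊕ Unit) ⊕ (Fin m ⊕ Unit))}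

abbrev Shape (n m : ℕ) (α : Set ((Fin n ⊕ Unit) ⊕ (Fin m ⊕ Unit))) : Prop :=
  ∀ x ∈ α, (∃ i : Fin n, x = .inl (.inl i)) ∨ (∃ j : Fin m, x = .inr (.inl j))

lemma exists_max_fin {N : ℕ} (s : Set (Fin N)) (hs : s.Nonempty) :
    ∃ k ∈ s, ∀ j ∈ s, j ≤ k := by
  obtain ⟨k, hk, hmax⟩ := Set.exists_max_image s id s.toFinite hs
  exact ⟨k, hk, hmax⟩

lemma goal_of_leftUnit (hsh : Shape n m α) {i : Fin n} (hi : (i : ℕ) + 1 = n)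
    (hmem : Sum.inl (Sum.inl i) ∈ α) :
    ∃ j ∈ nbhd (twoPathsAdj n m i0 j0) α \ α,
      ∃! x, x ∈ α ∧ twoPathsAdj n m i0 j0 x j := by
  refine ⟨Sum.inl (Sum.inr ()), ⟨⟨_, hmem, by simp [twoPathsAdj, pathAdj, hi]⟩, ?_⟩,
    ⟨_, ⟨hmem, by simp [twoPathsAdj, pathAdj, hi]⟩, ?_⟩⟩
  · intro hx
    rcases hsh _ hx with ⟨i', h⟩ | ⟨j', h⟩ <;> simp at h
  · rintro y ⟨hy, hadj⟩
    rcases hsh _ hy with ⟨i', rfl⟩ | ⟨j', rfl⟩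
    · simp only [twoPathsAdj, pathAdj] at hadj
      congr 2
      exact Fin.ext (by omega)
    · simp only [twoPathsAdj] at hadj
      exact absurd hadj.2 (by simp)

lemma goal_of_rightUnit (hsh : Shape n m α) {j : Fin m} (hj : (j : ℕ) + 1 = m)
    (hmem : Sum.inr (Sum.inl j) ∈ α) :
    ∃ j' ∈ nbhd (twoPathsAdj n m i0 j0) α \ α,
      ∃! x, x ∈ α ∧ twoPathsAdj n m i0 j0 x j' := by
  refine ⟨Sum.inr (Sum.inr ()), ⟨⟨_, hmem, by simp [twoPathsAdj, pathAdj, hj]⟩, ?_⟩,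
    ⟨_, ⟨hmem, by simp [twoPathsAdj, pathAdj, hj]⟩, ?_⟩⟩
  · intro hx
    rcases hsh _ hx with ⟨i', h⟩ | ⟨j', h⟩ <;> simp at h
  · rintro y ⟨hy, hadj⟩
    rcases hsh _ hy with ⟨i', rfl⟩ | ⟨j', rfl⟩
    · simp only [twoPathsAdj] at hadj
      exact absurd hadj.2 (by simp)
    · simp only [twoPathsAdj, pathAdj] at hadj
      congr 2
      exact Fin.ext (by omega)

lemma goal_of_rightState (hsh : Shape n m α) {k : Fin m}
    (hk : Sum.inr (Sum.inl k) ∈ α)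
    (hmax : ∀ j' : Fin m, Sum.inr (Sum.inl j') ∈ α → j' ≤ k)
    (hlt : (k : ℕ) + 1 < m)
    (hcross : (⟨(k : ℕ) + 1, hlt⟩ : Fin m) = j0 → Sum.inl (Sum.inl i0) ∉ α) :
    ∃ j' ∈ nbhd (twoPathsAdj n m i0 j0) α \ α,
      ∃! x, x ∈ α ∧ twoPathsAdj n m i0 j0 x j' := by
  set jv : Fin m := ⟨(k : ℕ) + 1, hlt⟩ with hjv
  have hadjk : twoPathsAdj n m i0 j0 (Sum.inr (Sum.inl k)) (Sum.inr (Sum.inl jv)) := by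
    simp [twoPathsAdj, pathAdj, hjv]
  refine ⟨Sum.inr (Sum.inl jv), ⟨⟨_, hk, hadjk⟩, ?_⟩, ⟨_, ⟨hk, hadjk⟩, ?_⟩⟩
  · intro hx
    have := hmax jv hx
    simp [Fin.le_def, hjv] at this
  · rintro y ⟨hy, hadj⟩
    rcases hsh _ hy with ⟨i', rfl⟩ | ⟨j', rfl⟩
    · simp only [twoPathsAdj, Sum.inl.injEq] at hadj
      obtain ⟨h1, h2⟩ := hadj
      subst h1
      exact absurd hy (hcross h2)
    · simp only [twoPathsAdj, pathAdj, Sum.inl.injEq] at hadj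
      have hle := hmax j' hy
      rw [Fin.le_def] at hle
      congr 2
      have hv : (jv : ℕ) = (k : ℕ) + 1 := rfl
      rcases hadj with h | h | h
      · exfalso; rw [h] at hle; omega
      · exact Fin.ext (by omega)
      · exfalso; omega

lemma goal_of_leftState (hsh : Shape n m α) {k : Fin n}
    (hk : Sum.inl (Sum.inl k) ∈ α)
    (hmax : ∀ i' : Fin n, Sum.inl (Sum.inl i') ∈ α → i' ≤ k)
    (hlt : (k : ℕ) + 1 < n)
    (hcross : (⟨(k : ℕ) + 1, hlt⟩ : Fin n) = i0 → Sum.inr (Sum.inl j0) ∉ α) :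
    ∃ j' ∈ nbhd (twoPathsAdj n m i0 j0) α \ α,
      ∃! x, x ∈ α ∧ twoPathsAdj n m i0 j0 x j' := by
  set jv : Fin n := ⟨(k : ℕ) + 1, hlt⟩ with hjv
  have hadjk : twoPathsAdj n m i0 j0 (Sum.inl (Sum.inl k)) (Sum.inl (Sum.inl jv)) := by
    simp [twoPathsAdj, pathAdj, hjv]
  refine ⟨Sum.inl (Sum.inl jv), ⟨⟨_, hk, hadjk⟩, ?_⟩, ⟨_, ⟨hk, hadjk⟩, ?_⟩⟩
  · intro hx
    have := hmax jv hx
    simp [Fin.le_def, hjv] at this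
  · rintro y ⟨hy, hadj⟩
    rcases hsh _ hy with ⟨i', rfl⟩ | ⟨j', rfl⟩
    · simp only [twoPathsAdj, pathAdj, Sum.inl.injEq] at hadj
      have hle := hmax i' hy
      rw [Fin.le_def] at hle
      congr 2
      have hv : (jv : ℕ) = (k : ℕ) + 1 := rfl
      rcases hadj with h | h | h
      · exfalso; rw [h] at hle; omega
      · exact Fin.ext (by omega)
      · exfalso; omega
    · simp only [twoPathsAdj, Sum.inl.injEq] at hadj
      obtain ⟨h1, h2⟩ := hadj
      subst h1
      exact absurd hy (hcross h2)

end Aux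

theorem stmt_14 (n m : ℕ) (i0 : Fin n) (j0 : Fin m) :
    dedCond (twoPathsAdj n m i0 j0)
      ((Sum.inl '' {v | ∃ i : Fin n, v = .inl i}) ∪
       (Sum.inr '' {v | ∃ j : Fin m, v = .inl j})) := by
  classical
  intro α hαS hne _
  have hsh : Shape n m α := by
    intro x hx
    have := hαS hx
    simp only [Set.mem_union, Set.mem_image, Set.mem_setOf_eq] at this
    rcases this with ⟨v, ⟨i, rfl⟩, rfl⟩ | ⟨v, ⟨j, rfl⟩, rfl⟩
    · exact Or.inl ⟨i, rfl⟩
    · exact Or.inr ⟨j, rfl⟩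
  by_cases h1 : ∃ i : Fin n, (i : ℕ) + 1 = n ∧ Sum.inl (Sum.inl i) ∈ α
  · obtain ⟨i, hi, hmem⟩ := h1
    exact goal_of_leftUnit hsh hi hmem
  by_cases h2 : ∃ j : Fin m, (j : ℕ) + 1 = m ∧ Sum.inr (Sum.inl j) ∈ α
  · obtain ⟨j, hj, hmem⟩ := h2
    exact goal_of_rightUnit hsh hj hmem
  push_neg at h1 h2
  by_cases hR : ∃ j : Fin m, Sum.inr (Sum.inl j) ∈ α
  · obtain ⟨k, hk, hmax⟩ := exists_max_fin {j : Fin m | Sum.inr (Sum.inl j) ∈ α} hR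
    have hlt : (k : ℕ) + 1 < m := by
      have h := k.isLt
      have h' : (k : ℕ) + 1 ≠ m := fun he => h2 k he hk
      omega
    by_cases hc : (⟨(k : ℕ) + 1, hlt⟩ : Fin m) = j0 ∧ Sum.inl (Sum.inl i0) ∈ α
    · -- switch to left side: i0 ∈ αL
      obtain ⟨hcj, hi0⟩ := hc
      obtain ⟨kL, hkL, hmaxL⟩ := exists_max_fin {i : Fin n | Sum.inl (Sum.inl i) ∈ α} ⟨i0, hi0⟩
      have hltL : (kL : ℕ) + 1 < n := by
        have h := kL.isLt
        have h' : (kL : ℕ) + 1 ≠ n := fun he => h1 kL he hkL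
        omega
      have hge : i0 ≤ kL := hmaxL i0 hi0
      refine goal_of_leftState hsh hkL hmaxL hltL ?_
      intro heq
      exfalso
      rw [Fin.le_def] at hge
      have : (i0 : ℕ) = (kL : ℕ) + 1 := by rw [← heq]
      omega
    · refine goal_of_rightState hsh hk hmax hlt ?_
      intro heq hmem
      exact hc ⟨heq, hmem⟩
  · -- α has only left states
    obtain ⟨x, hx⟩ := hne
    rcases hsh x hx with ⟨i, rfl⟩ | ⟨j, rfl⟩
    · obtain ⟨kL, hkL, hmaxL⟩ := exists_max_fin {i' : Fin n | Sum.inl (Sum.inl i') ∈ α} ⟨i, hx⟩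
      have hltL : (kL : ℕ) + 1 < n := by
        have h := kL.isLt
        have h' : (kL : ℕ) + 1 ≠ n := fun he => h1 kL he hkL
        omega
      refine goal_of_leftState hsh hkL hmaxL hltL ?_
      intro _ hmem
      exact hR ⟨j0, hmem⟩
    · exact absurd ⟨j, hx⟩ hR
end
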